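/- For every x ∈ X, the commutator of the oracle unitary O^x := (1_Y ⊗ F)·CNOT·(1_Y ⊗ F) with the projection 1_Y ⊗ Π^x satisfies ‖[O^x, 1_Y ⊗ Π^x]‖ ≤ 2·2^{−n/2}·√(2·Γ_x). -/

import Mathlib

open scoped Matrix Kronecker

noncomputable section

/-- The ℓ²→ℓ² operator norm of a square complex matrix. -/
def opNorm {I : Type*} [Fintype I] [DecidableEq I] (A : Matrix I I ℂ) : ℝ :=
  ‖Matrix.toEuclideanCLM (𝕜 := ℂ) A‖

/-- The commutator [A,B] = AB - BA. -/
def commM {I : Type*} [Fintype I] (A B : Matrix I I ℂ) : Matrix I I ℂ := A * B - B * A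

/-- Euclidean norm of a vector in ℂ^I. -/
def vnorm {I : Type*} [Fintype I] (v : I → ℂ) : ℝ := Real.sqrt (∑ i, ‖v i‖ ^ 2)

/-- Y = {0,1}^n. -/
abbrev Yb (n : ℕ) := Fin n → Bool
/-- Ȳ = Y ∪ {⊥}. -/
abbrev Ybar (n : ℕ) := Option (Yb n)

/-- standard basis vector |a⟩. -/
def ket {n : ℕ} (a : Ybar n) : Ybar n → ℂ := fun b => if b = a then 1 else 0

/-- (-1)^{η⋅y}. -/
def signDot {n : ℕ} (η y : Yb n) : ℂ := (-1 : ℂ) ^ (Finset.univ.filter fun i => η i && y i).card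

/-- 2^{-n/2}. -/
def cst (n : ℕ) : ℝ := (2 : ℝ) ^ (-(n : ℝ) / 2)

/-- |φ_η⟩ = 2^{-n/2} ∑_y (-1)^{η⋅y} |y⟩. -/
def phi {n : ℕ} (η : Yb n) : Ybar n → ℂ :=
  fun a => Option.casesOn a 0 fun y => (cst n : ℂ) * signDot η y

/-- |φ_0⟩. -/
def phi0 (n : ℕ) : Ybar n → ℂ := phi fun _ => false

/-- The Walsh–Hadamard transform on ℂ^Y, extended by the identity on |⊥⟩. -/
def Hbar (n : ℕ) : Matrix (Ybar n) (Ybar n) ℂ :=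
  Matrix.of fun a b =>
    match a, b with
    | none, none => 1
    | some y, some y' => (cst n : ℂ) * signDot y y'
    | _, _ => 0

/-- The involution exchanging ⊥ and 0^n. -/
def swapBot (n : ℕ) : Ybar n → Ybar n :=
  fun a =>
    Option.casesOn a (some fun _ => false) fun y =>
      if y = (fun _ => false) then none else some y

/-- The permutation matrix exchanging |⊥⟩ and |0^n⟩. -/
def Sswap (n : ℕ) : Matrix (Ybar n) (Ybar n) ℂ :=
  Matrix.of fun a b => if a = swapBot n b then 1 else 0

/-- F = H̄ ⬝ S ⬝ H̄. -/
def Fmat (n : ℕ) : Matrix (Ybar n) (Ybar n) ℂ := Hbar n * Sswap n * Hbar n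

/-- Γ_x = |{y : (x,y) ∈ R}|. -/
def Gam {n : ℕ} {X : Type*} [Fintype X] (R : X → Yb n → Prop) [∀ x, DecidablePred (R x)]
    (x : X) : ℕ :=
  (Finset.univ.filter fun y => R x y).card

/-- Γ_R = max_x Γ_x. -/
def GamR {n : ℕ} {X : Type*} [Fintype X] (R : X → Yb n → Prop) [∀ x, DecidablePred (R x)] : ℕ :=
  Finset.univ.sup fun x => Gam R x

/-- whether an entry a ∈ Ȳ satisfies the relation at x (⊥ never does). -/
def hitB {n : ℕ} {X : Type*} (R : X → Yb n → Prop) [∀ x, DecidablePred (R x)] (x : X) :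
    Ybar n → Bool :=
  fun a => Option.casesOn a false fun y => decide (R x y)

/-- The projection Π^x = ∑_{y : (x,y)∈R} |y⟩⟨y| on ℂ^Ȳ. -/
def Pix {n : ℕ} {X : Type*} (R : X → Yb n → Prop) [∀ x, DecidablePred (R x)] (x : X) :
    Matrix (Ybar n) (Ybar n) ℂ :=
  Matrix.diagonal fun a => if hitB R x a then 1 else 0

/-- bitwise xor. -/
def xorY {n : ℕ} (y y' : Yb n) : Yb n := fun i => xor (y i) (y' i)

/-- CNOT on Y × Ȳ (control Ȳ, target Y), acting trivially on |y⟩⊗|⊥⟩. -/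
def cnotFun (n : ℕ) : Yb n × Ybar n → Yb n × Ybar n :=
  fun p => Option.casesOn p.2 p fun y' => (xorY p.1 y', p.2)

def CNOTmat (n : ℕ) : Matrix (Yb n × Ybar n) (Yb n × Ybar n) ℂ :=
  Matrix.of fun a b => if a = cnotFun n b then 1 else 0

/-- O^x = (1⊗F)·CNOT·(1⊗F) on ℂ^{Y×Ȳ}. -/
def Oxsmall (n : ℕ) : Matrix (Yb n × Ybar n) (Yb n × Ybar n) ℂ :=
  ((1 : Matrix (Yb n) (Yb n) ℂ) ⊗ₖ Fmat n) * CNOTmat n *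
    ((1 : Matrix (Yb n) (Yb n) ℂ) ⊗ₖ Fmat n)

/-- The database index set D̄ = X → Ȳ. -/
abbrev Db (n : ℕ) (X : Type*) := X → Ybar n

/-- An operator A on ℂ^Ȳ acting on the x-coordinate of ℂ^{D̄}. -/
def onCoord {n : ℕ} {X : Type*} [Fintype X] [DecidableEq X] (x : X)
    (A : Matrix (Ybar n) (Ybar n) ℂ) : Matrix (Db n X) (Db n X) ℂ :=
  Matrix.of fun d d' => if ∀ x', x' ≠ x → d x' = d' x' then A (d x) (d' x) else 0

/-- Π^x_{D_x} : diagonal projection on ℂ^{D̄} onto databases with (x, d x) ∈ R. -/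
def PiDx {n : ℕ} {X : Type*} [Fintype X] [DecidableEq X]
    (R : X → Yb n → Prop) [∀ x, DecidablePred (R x)] (x : X) :
    Matrix (Db n X) (Db n X) ℂ :=
  Matrix.diagonal fun d => if hitB R x (d x) then 1 else 0

/-- Π^∅_D : diagonal projection on ℂ^{D̄} onto databases hitting R nowhere. -/
def PiEmptyD {n : ℕ} {X : Type*} [Fintype X] [DecidableEq X]
    (R : X → Yb n → Prop) [∀ x, DecidablePred (R x)] :
    Matrix (Db n X) (Db n X) ℂ :=
  Matrix.diagonal fun d => if ∀ x, hitB R x (d x) = false then 1 else 0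

/-- CNOT_{YD_x}. -/
def cnotDFun {n : ℕ} {X : Type*} (x : X) : Yb n × Db n X → Yb n × Db n X :=
  fun p => Option.casesOn (p.2 x) p fun yx => (xorY p.1 yx, p.2)

def CNOTD {n : ℕ} {X : Type*} [Fintype X] [DecidableEq X] (x : X) :
    Matrix (Yb n × Db n X) (Yb n × Db n X) ℂ :=
  Matrix.of fun a b => if a = cnotDFun x b then 1 else 0

/-- F_{D_x}. -/
def FDx (n : ℕ) {X : Type*} [Fintype X] [DecidableEq X] (x : X) :
    Matrix (Db n X) (Db n X) ℂ :=
  onCoord x (Fmat n)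

/-- O^x_{YD_x} = F_{D_x}·CNOT_{YD_x}·F_{D_x} on ℂ^{Y×D̄}. -/
def OxD (n : ℕ) {X : Type*} [Fintype X] [DecidableEq X] (x : X) :
    Matrix (Yb n × Db n X) (Yb n × Db n X) ℂ :=
  ((1 : Matrix (Yb n) (Yb n) ℂ) ⊗ₖ FDx n x) * CNOTD x *
    ((1 : Matrix (Yb n) (Yb n) ℂ) ⊗ₖ FDx n x)

/-- O_{XYD} = ∑_x |x⟩⟨x| ⊗ O^x_{YD_x} on ℂ^{X×Y×D̄}. -/
def OXYD (n : ℕ) (X : Type*) [Fintype X] [DecidableEq X] :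
    Matrix (X × Yb n × Db n X) (X × Yb n × Db n X) ℂ :=
  Matrix.of fun p q =>
    if p.1 = q.1 then OxD n p.1 (p.2.1, p.2.2) (q.2.1, q.2.2) else 0

/-- The pointer set P = ZMod (|X|+1). -/
abbrev Ptr (X : Type*) [Fintype X] := ZMod (Fintype.card X + 1)

/-- Encoding of X into the nonzero elements of ZMod (|X|+1). -/
def encodeX {X : Type*} [Fintype X] (x : X) : Ptr X :=
  (((Fintype.equivFin X x : ℕ) + 1 : ℕ) : Ptr X)

/-- ext(d): the smallest x ∈ X with (x, d x) ∈ R, encoded in ZMod (|X|+1); ∅ ↦ 0. -/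
def extD {n : ℕ} {X : Type*} [Fintype X] [LinearOrder X] (R : X → Yb n → Prop)
    [∀ x, DecidablePred (R x)] (d : Db n X) : Ptr X :=
  if h : (Finset.univ.filter fun x => hitB R x (d x) = true).Nonempty then
    encodeX ((Finset.univ.filter fun x => hitB R x (d x) = true).min' h)
  else 0

/-- The purified measurement M_{DP} : |d⟩⊗|w⟩ ↦ |d⟩⊗|w + ext(d)⟩ on ℂ^{D̄×P}. -/
def MDP {n : ℕ} {X : Type*} [Fintype X] [LinearOrder X] (R : X → Yb n → Prop)
    [∀ x, DecidablePred (R x)] :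
    Matrix (Db n X × Ptr X) (Db n X × Ptr X) ℂ :=
  Matrix.of fun p q => if p = (q.1, q.2 + extD R q.1) then 1 else 0

/-- O^x_{YD_x} ⊗ 1_P on ℂ^{Y×D̄×P}. -/
def OxDP (n : ℕ) {X : Type*} [Fintype X] [DecidableEq X] (x : X) :
    Matrix (Yb n × Db n X × Ptr X) (Yb n × Db n X × Ptr X) ℂ :=
  Matrix.of fun p q =>
    if p.2.2 = q.2.2 then OxD n x (p.1, p.2.1) (q.1, q.2.1) else 0

/-- 1_Y ⊗ M_{DP} on ℂ^{Y×D̄×P}. -/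
def MYDP {n : ℕ} {X : Type*} [Fintype X] [LinearOrder X] (R : X → Yb n → Prop)
    [∀ x, DecidablePred (R x)] :
    Matrix (Yb n × Db n X × Ptr X) (Yb n × Db n X × Ptr X) ℂ :=
  Matrix.of fun p q =>
    if p.1 = q.1 then MDP R (p.2.1, p.2.2) (q.2.1, q.2.2) else 0

/-- O_{XYD} ⊗ 1_P on ℂ^{X×Y×D̄×P}. -/
def OXYDP (n : ℕ) (X : Type*) [Fintype X] [DecidableEq X] :
    Matrix (X × Yb n × Db n X × Ptr X) (X × Yb n × Db n X × Ptr X) ℂ :=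
  Matrix.of fun p q =>
    if p.2.2.2 = q.2.2.2 then
      OXYD n X (p.1, p.2.1, p.2.2.1) (q.1, q.2.1, q.2.2.1)
    else 0

/-- 1_{X×Y} ⊗ M_{DP} on ℂ^{X×Y×D̄×P}. -/
def MXYDP {n : ℕ} {X : Type*} [Fintype X] [LinearOrder X] (R : X → Yb n → Prop)
    [∀ x, DecidablePred (R x)] :
    Matrix (X × Yb n × Db n X × Ptr X) (X × Yb n × Db n X × Ptr X) ℂ :=
  Matrix.of fun p q =>
    if p.1 = q.1 ∧ p.2.1 = q.2.1 then
      MDP R (p.2.2.1, p.2.2.2) (q.2.2.1, q.2.2.2)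
    else 0








-- helper instance (Lean struggles to find this by search)
instance instDEq4 (n : ℕ) (X : Type*) [Fintype X] [DecidableEq X] :
    DecidableEq (X × Yb n × Db n X × Ptr X) :=
  instDecidableEqProd


-- extensions to the five-register space W × X × Y × D̄ × P
/-- 1_W ⊗ O_{XYD} ⊗ 1_P on ℂ^{W×X×Y×D̄×P}. -/
def OW (n : ℕ) (W X : Type*) [Fintype X] [DecidableEq X] [DecidableEq W] :
    Matrix (W × X × Yb n × Db n X × Ptr X) (W × X × Yb n × Db n X × Ptr X) ℂ :=
  Matrix.of fun p q =>
    if p.1 = q.1 ∧ p.2.2.2.2 = q.2.2.2.2 then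
      OXYD n X (p.2.1, p.2.2.1, p.2.2.2.1) (q.2.1, q.2.2.1, q.2.2.2.1)
    else 0

/-- 1_{W×X×Y} ⊗ M_{DP} on ℂ^{W×X×Y×D̄×P}. -/
def MW {n : ℕ} (W : Type*) {X : Type*} [Fintype X] [LinearOrder X] [DecidableEq W]
    (R : X → Yb n → Prop) [∀ x, DecidablePred (R x)] :
    Matrix (W × X × Yb n × Db n X × Ptr X) (W × X × Yb n × Db n X × Ptr X) ℂ :=
  Matrix.of fun p q =>
    if p.1 = q.1 ∧ p.2.1 = q.2.1 ∧ p.2.2.1 = q.2.2.1 then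
      MDP R (p.2.2.2.1, p.2.2.2.2) (q.2.2.2.1, q.2.2.2.2)
    else 0

instance instDEq5 (n : ℕ) (W X : Type*) [Fintype X] [DecidableEq X] [DecidableEq W] :
    DecidableEq (W × X × Yb n × Db n X × Ptr X) :=
  instDecidableEqProd


/-- V ⊗ 1_{D̄×P} on ℂ^{W×X×Y×D̄×P}. -/
def Vext (n : ℕ) (W X : Type*) [Fintype X] [DecidableEq X]
    (V : Matrix (W × X × Yb n) (W × X × Yb n) ℂ) :
    Matrix (W × X × Yb n × Db n X × Ptr X) (W × X × Yb n × Db n X × Ptr X) ℂ :=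
  Matrix.of fun p q =>
    if p.2.2.2 = q.2.2.2 then V (p.1, p.2.1, p.2.2.1) (q.1, q.2.1, q.2.2.1) else 0

/-- Ψ = ψ ⊗ |⊥⃗⟩ ⊗ |0⟩. -/
def PsiInit (n : ℕ) {W X : Type*} [Fintype X] [DecidableEq X]
    (ψ : W × X × Yb n → ℂ) : W × X × Yb n × Db n X × Ptr X → ℂ :=
  fun p =>
    if p.2.2.2.1 = (fun _ => (none : Ybar n)) ∧ p.2.2.2.2 = (0 : Ptr X) then
      ψ (p.1, p.2.1, p.2.2.1)
    else 0

/-- 1_{W×X×Y×D̄} ⊗ |0⟩⟨0|_P. -/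
def ProjZeroP (n : ℕ) (W X : Type*) [Fintype X] [DecidableEq X] [DecidableEq W] :
    Matrix (W × X × Yb n × Db n X × Ptr X) (W × X × Yb n × Db n X × Ptr X) ℂ :=
  Matrix.of fun p q =>
    if p.1 = q.1 ∧ p.2.1 = q.2.1 ∧ p.2.2.1 = q.2.2.1 ∧ p.2.2.2.1 = q.2.2.2.1 ∧
        p.2.2.2.2 = (0 : Ptr X) ∧ q.2.2.2.2 = (0 : Ptr X) then 1 else 0



/-- O_{XYD} acting on registers 1, 2 and 5 of ℂ^{X×Y×X'×Y'×D̄}. -/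
def Oquery1 (n : ℕ) (X : Type*) [Fintype X] [DecidableEq X] :
    Matrix (X × Yb n × X × Yb n × Db n X) (X × Yb n × X × Yb n × Db n X) ℂ :=
  Matrix.of fun p q =>
    if p.2.2.1 = q.2.2.1 ∧ p.2.2.2.1 = q.2.2.2.1 then
      OXYD n X (p.1, p.2.1, p.2.2.2.2) (q.1, q.2.1, q.2.2.2.2)
    else 0

/-- O_{X'Y'D} acting on registers 3, 4 and 5 of ℂ^{X×Y×X'×Y'×D̄}. -/
def Oquery2 (n : ℕ) (X : Type*) [Fintype X] [DecidableEq X] :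
    Matrix (X × Yb n × X × Yb n × Db n X) (X × Yb n × X × Yb n × Db n X) ℂ :=
  Matrix.of fun p q =>
    if p.1 = q.1 ∧ p.2.1 = q.2.1 then
      OXYD n X (p.2.2.1, p.2.2.2.1, p.2.2.2.2) (q.2.2.1, q.2.2.2.1, q.2.2.2.2)
    else 0


/-- M^R_{DP} acting on registers D and P of ℂ^{D̄×P×P'}. -/
def Mext1 {n : ℕ} {X : Type*} [Fintype X] [LinearOrder X]
    (R : X → Yb n → Prop) [∀ x, DecidablePred (R x)] :
    Matrix (Db n X × Ptr X × Ptr X) (Db n X × Ptr X × Ptr X) ℂ :=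
  Matrix.of fun p q =>
    if p.2.2 = q.2.2 then MDP R (p.1, p.2.1) (q.1, q.2.1) else 0

/-- M^{R'}_{DP'} acting on registers D and P' of ℂ^{D̄×P×P'}. -/
def Mext2 {n : ℕ} {X : Type*} [Fintype X] [LinearOrder X]
    (R' : X → Yb n → Prop) [∀ x, DecidablePred (R' x)] :
    Matrix (Db n X × Ptr X × Ptr X) (Db n X × Ptr X × Ptr X) ℂ :=
  Matrix.of fun p q =>
    if p.2.1 = q.2.1 then MDP R' (p.1, p.2.2) (q.1, q.2.2) else 0



set_option linter.unusedSectionVars false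
section AuxNorm
open Matrix
open scoped Matrix.Norms.L2Operator

variable {I : Type*} [Fintype I] [DecidableEq I]

lemma opNorm_eq_norm (A : Matrix I I ℂ) : opNorm A = ‖A‖ := (Matrix.cstar_norm_def A).symm

lemma norm_le_one_of_unitary (U : Matrix I I ℂ) (h : Uᴴ * U = 1) : ‖U‖ ≤ 1 := by
  have h1 : ‖U‖ * ‖U‖ = ‖(1 : Matrix I I ℂ)‖ := by
    rw [← h, Matrix.l2_opNorm_conjTranspose_mul_self]
  have h2 : ‖(1 : Matrix I I ℂ)‖ ≤ 1 := by
    rw [Matrix.cstar_norm_def, _root_.map_one]; exact ContinuousLinearMap.norm_id_le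
  nlinarith [norm_nonneg U]

lemma norm_le_sqrt_of_poly (D : Matrix I I ℂ) (K : ℝ) (hK : 0 ≤ K) (hH : Dᴴ = D)
    (hpoly : D * D * (D * D) = (K : ℂ) • (D * D)) : ‖D‖ ≤ Real.sqrt K := by
  have h1 : ‖D‖ * ‖D‖ = ‖D * D‖ := by
    rw [← Matrix.l2_opNorm_conjTranspose_mul_self D, hH]
  have hDD : (D * D)ᴴ = D * D := by rw [Matrix.conjTranspose_mul, hH]
  have h2 : ‖D * D‖ * ‖D * D‖ = K * ‖D * D‖ := by
    rw [← Matrix.l2_opNorm_conjTranspose_mul_self (D * D), hDD, hpoly, norm_smul]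
    simp [Real.norm_eq_abs, abs_of_nonneg hK]
  have h3 : ‖D * D‖ ≤ K := by nlinarith [norm_nonneg (D * D)]
  calc ‖D‖ = Real.sqrt (‖D‖ * ‖D‖) := (Real.sqrt_mul_self (norm_nonneg D)).symm
    _ ≤ Real.sqrt K := Real.sqrt_le_sqrt (by rw [h1]; exact h3)

lemma vmv_mul_vmv (a b c d : I → ℂ) :
    vecMulVec a b * vecMulVec c d = (b ⬝ᵥ c) • vecMulVec a d := by
  ext i j
  simp only [Matrix.mul_apply, Matrix.vecMulVec_apply, Matrix.smul_apply, dotProduct,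
    smul_eq_mul, Finset.sum_mul]
  exact Finset.sum_congr rfl fun k _ => by ring

lemma mul_vmv (M : Matrix I I ℂ) (a b : I → ℂ) : M * vecMulVec a b = vecMulVec (M *ᵥ a) b := by
  ext i j
  simp only [Matrix.mul_apply, Matrix.vecMulVec_apply, Matrix.mulVec, dotProduct,
    Finset.sum_mul]
  exact Finset.sum_congr rfl fun k _ => by ring

lemma vmv_mul (M : Matrix I I ℂ) (a b : I → ℂ) : vecMulVec a b * M = vecMulVec a (b ᵥ* M) := by
  ext i j
  simp only [Matrix.mul_apply, Matrix.vecMulVec_apply, Matrix.vecMul, dotProduct,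
    Finset.mul_sum]
  exact Finset.sum_congr rfl fun k _ => by ring

lemma vmv_herm (a : I → ℂ) : (vecMulVec a (star a))ᴴ = vecMulVec a (star a) := by
  ext i j
  simp only [Matrix.conjTranspose_apply, Matrix.vecMulVec_apply, Pi.star_apply]
  simp [mul_comm]

end AuxNorm
section AuxH
open Matrix

variable {n : ℕ}

def z0 (n : ℕ) : Yb n := fun _ => false

def uvec (n : ℕ) : Ybar n → ℂ := fun a => ket (none : Ybar n) a - ket (some (z0 n)) a

def vvec (n : ℕ) : Ybar n → ℂ := fun a => Option.casesOn a 1 fun _ => -(cst n : ℂ)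

lemma signDot_comm (y y' : Yb n) : signDot y y' = signDot y' y := by
  unfold signDot
  have h : (Finset.filter (fun i => (y i && y' i) = true) Finset.univ)
      = (Finset.filter (fun i => (y' i && y i) = true) Finset.univ) := by
    apply Finset.filter_congr
    intro i _
    simp [Bool.and_comm]
  rw [h]

lemma signDot_z0 (y : Yb n) : signDot y (z0 n) = 1 := by
  unfold signDot z0
  simp

lemma signDot_eq_prod (y z : Yb n) :
    signDot y z = ∏ i, (if y i && z i then (-1 : ℂ) else 1) := by
  unfold signDot
  rw [Finset.card_filter, ← Finset.prod_pow_eq_pow_sum]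
  apply Finset.prod_congr rfl
  intro i _
  by_cases h : y i && z i <;> simp [h]

lemma signDot_sum (y y' : Yb n) :
    ∑ z : Yb n, signDot y z * signDot y' z = if y = y' then ((2 : ℂ) ^ n) else 0 := by
  have key : ∀ z : Yb n, signDot y z * signDot y' z =
      ∏ i, ((if y i && z i then (-1 : ℂ) else 1) * (if y' i && z i then (-1 : ℂ) else 1)) := by
    intro z
    rw [signDot_eq_prod, signDot_eq_prod, ← Finset.prod_mul_distrib]
  simp only [key]
  rw [show (∑ z : Yb n, ∏ i, ((if y i && z i then (-1 : ℂ) else 1) *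
      (if y' i && z i then (-1 : ℂ) else 1))) =
      ∏ i, ∑ b : Bool, ((if y i && b then (-1 : ℂ) else 1) *
      (if y' i && b then (-1 : ℂ) else 1)) from by
    rw [Finset.prod_univ_sum]
    rw [Fintype.piFinset_univ]]
  by_cases h : y = y'
  · subst h
    rw [if_pos rfl]
    have hfac : ∀ i ∈ (Finset.univ : Finset (Fin n)),
        (∑ b : Bool, ((if y i && b then (-1 : ℂ) else 1) * (if y i && b then (-1 : ℂ) else 1)))
          = 2 := by
      intro i _
      rw [Fintype.sum_bool]
      by_cases hy : y i <;> simp [hy] <;> norm_num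
    rw [Finset.prod_congr rfl hfac, Finset.prod_const]
    simp
  · rw [if_neg h]
    obtain ⟨i, hi⟩ : ∃ i, y i ≠ y' i := by
      by_contra hc
      push_neg at hc
      exact h (funext hc)
    apply Finset.prod_eq_zero (Finset.mem_univ i)
    rw [Fintype.sum_bool]
    rcases Bool.eq_false_or_eq_true (y i) with hy | hy <;>
      rcases Bool.eq_false_or_eq_true (y' i) with hy' | hy' <;>
        simp_all
end AuxH
section AuxF
open Matrix

variable {n : ℕ}

lemma cst_pos (n : ℕ) : 0 < cst n := Real.rpow_pos_of_pos (by norm_num) _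

lemma cst_sq (n : ℕ) : cst n * cst n = (2 : ℝ) ^ (-(n : ℝ)) := by
  unfold cst
  rw [← Real.rpow_add (by norm_num)]
  ring_nf

lemma cst_sq_mul_card (n : ℕ) : (cst n : ℂ) * (cst n : ℂ) * (2 : ℂ) ^ n = 1 := by
  have h2 : (cst n * cst n : ℝ) * (2 : ℝ) ^ (n : ℕ) = 1 := by
    rw [cst_sq, ← Real.rpow_natCast (2 : ℝ) n, ← Real.rpow_add (by norm_num)]
    norm_num
  have := congrArg (fun r : ℝ => (r : ℂ)) h2
  push_cast at this
  linear_combination this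

lemma signDot_conj (y y' : Yb n) : (starRingEnd ℂ) (signDot y y') = signDot y y' := by
  unfold signDot
  rw [map_pow]
  norm_num

lemma Hbar_herm (n : ℕ) : (Hbar n)ᴴ = Hbar n := by
  ext a b
  rw [Matrix.conjTranspose_apply]
  rcases a with _ | y <;> rcases b with _ | y'
  · simp [Hbar]
  · simp [Hbar]
  · simp [Hbar]
  · show (starRingEnd ℂ) (Hbar n (some y') (some y)) = Hbar n (some y) (some y')
    simp only [Hbar, Matrix.of_apply]
    rw [_root_.map_mul, signDot_conj, Complex.conj_ofReal, signDot_comm]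

lemma Hbar_mul_Hbar (n : ℕ) : Hbar n * Hbar n = 1 := by
  ext a b
  rw [Matrix.mul_apply, univ_option, Finset.sum_insertNone]
  rcases a with _ | y <;> rcases b with _ | y'
  · simp [Hbar]
  · simp [Hbar]
  · simp [Hbar]
  · simp only [Hbar, Matrix.of_apply]
    have hterm : ∀ z : Yb n, ((cst n : ℂ) * signDot y z) * ((cst n : ℂ) * signDot z y')
        = ((cst n : ℂ) * (cst n : ℂ)) * (signDot y z * signDot y' z) := by
      intro z
      rw [signDot_comm z y']
      ring
    simp only [hterm]
    rw [← Finset.mul_sum, signDot_sum]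
    by_cases h : y = y'
    · subst h
      simp only [if_pos rfl, Matrix.one_apply_eq]
      simpa using cst_sq_mul_card n
    · simp [Matrix.one_apply, h]

lemma uvec_none (n : ℕ) : uvec n none = 1 := by simp [uvec, ket]

lemma uvec_some (y : Yb n) : uvec n (some y) = if y = z0 n then -1 else 0 := by
  by_cases h : y = z0 n <;> simp [uvec, ket, h]

lemma swapBot_none (n : ℕ) : swapBot n none = some (z0 n) := rfl

lemma swapBot_some (y : Yb n) : swapBot n (some y) = if y = z0 n then none else some y := rfl

lemma Sswap_eq (n : ℕ) : Sswap n = 1 - vecMulVec (uvec n) (star (uvec n)) := by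
  ext a b
  simp only [Sswap, Matrix.of_apply, Matrix.sub_apply, Matrix.one_apply,
    Matrix.vecMulVec_apply, Pi.star_apply]
  rcases a with _ | y <;> rcases b with _ | y'
  · simp [swapBot_none, uvec_none]
  · by_cases h : y' = z0 n
    · subst h
      simp [swapBot_some, uvec_none, uvec_some]
    · simp [swapBot_some, h, uvec_none, uvec_some]
  · by_cases h : y = z0 n
    · subst h
      simp [swapBot_none, uvec_none, uvec_some]
    · simp [swapBot_none, h, uvec_none, uvec_some, Ne.symm h]
  · by_cases h : y' = z0 n
    · subst h
      by_cases h2 : y = z0 n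
      · subst h2
        simp [swapBot_some, uvec_some]
      · simp [swapBot_some, uvec_some, h2]
    · by_cases h2 : y = z0 n
      · subst h2
        simp [swapBot_some, h, uvec_some, Ne.symm h]
      · simp [swapBot_some, h, h2, uvec_some]

lemma Hbar_mulVec_uvec (n : ℕ) : Hbar n *ᵥ uvec n = vvec n := by
  funext a
  have expand : (Hbar n *ᵥ uvec n) a = Hbar n a none - Hbar n a (some (z0 n)) := by
    simp only [Matrix.mulVec, dotProduct, uvec, ket, mul_sub]
    rw [Finset.sum_sub_distrib]
    congr 1
    · rw [Finset.sum_eq_single (none : Ybar n)] <;> simp +contextual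
    · rw [Finset.sum_eq_single (some (z0 n))] <;> simp +contextual
  rw [expand]
  rcases a with _ | y <;> simp [Hbar, vvec, signDot_z0]

lemma Fmat_eq (n : ℕ) : Fmat n = 1 - vecMulVec (vvec n) (star (vvec n)) := by
  unfold Fmat
  rw [Sswap_eq, mul_sub, sub_mul, mul_one, Hbar_mul_Hbar]
  congr 1
  rw [mul_vmv, vmv_mul, Hbar_mulVec_uvec]
  rw [show star (uvec n) ᵥ* Hbar n = star (uvec n) ᵥ* (Hbar n)ᴴ from by rw [Hbar_herm],
    ← Matrix.star_mulVec, Hbar_mulVec_uvec]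

end AuxF
section AuxD
open Matrix

variable {n : ℕ} {X : Type*} [Fintype X] (R : X → Yb n → Prop) [∀ x, DecidablePred (R x)] (x : X)

lemma Pix_herm : (Pix R x)ᴴ = Pix R x := by
  unfold Pix
  rw [Matrix.diagonal_conjTranspose]
  have h : (star fun a => if hitB R x a then (1 : ℂ) else 0)
      = fun a => if hitB R x a then (1 : ℂ) else 0 := by
    funext a
    by_cases h : hitB R x a <;> simp [h]
  rw [h]

lemma card_Yb (n : ℕ) : Fintype.card (Yb n) = 2 ^ n := by
  simp [Fintype.card_fun]

lemma vvec_dot (n : ℕ) : star (vvec n) ⬝ᵥ vvec n = 2 := by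
  unfold dotProduct
  rw [univ_option, Finset.sum_insertNone]
  simp only [Pi.star_apply]
  have h0 : star (vvec n none) * vvec n none = 1 := by
    show star (1 : ℂ) * 1 = 1
    simp
  have hterm : ∀ y : Yb n, star (vvec n (some y)) * vvec n (some y)
      = ((cst n * cst n : ℝ) : ℂ) := by
    intro y
    show star (-(cst n : ℂ)) * -(cst n : ℂ) = _
    rw [star_neg, neg_mul_neg, RCLike.star_def, Complex.conj_ofReal]
    push_cast
    ring
  rw [h0, Finset.sum_congr rfl fun y _ => hterm y, Finset.sum_const, Finset.card_univ,
    card_Yb, nsmul_eq_mul]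
  push_cast
  linear_combination cst_sq_mul_card n

lemma wvec_apply (a : Ybar n) : (Pix R x *ᵥ vvec n) a =
    Option.casesOn a 0 fun y => if R x y then -(cst n : ℂ) else 0 := by
  unfold Pix
  rw [Matrix.mulVec_diagonal]
  rcases a with _ | y
  · simp [hitB]
  · by_cases h : R x y <;> simp [hitB, vvec, h]

lemma vw_dot : star (vvec n) ⬝ᵥ (Pix R x *ᵥ vvec n) =
    (((Gam R x : ℝ) * (cst n * cst n) : ℝ) : ℂ) := by
  unfold dotProduct
  simp only [Pi.star_apply, wvec_apply]
  rw [univ_option, Finset.sum_insertNone]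
  have h0 : star (vvec n none) * (Option.casesOn (none : Ybar n) 0
      fun y => if R x y then -(cst n : ℂ) else 0) = 0 := by
    show star (vvec n none) * 0 = 0
    rw [mul_zero]
  have hterm : ∀ y : Yb n, star (vvec n (some y)) * (Option.casesOn (some y : Ybar n) 0
      fun y => if R x y then -(cst n : ℂ) else 0)
      = if R x y then ((cst n * cst n : ℝ) : ℂ) else 0 := by
    intro y
    show star (-(cst n : ℂ)) * (if R x y then -(cst n : ℂ) else 0) = _
    by_cases h : R x y
    · rw [if_pos h, if_pos h, star_neg, neg_mul_neg, RCLike.star_def, Complex.conj_ofReal]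
      push_cast
      ring
    · rw [if_neg h, if_neg h, mul_zero]
  rw [h0, zero_add, Finset.sum_congr rfl fun y _ => hterm y, Finset.sum_ite, Finset.sum_const,
    Finset.sum_const_zero, add_zero, nsmul_eq_mul]
  unfold Gam
  push_cast
  ring

lemma wv_dot : star (Pix R x *ᵥ vvec n) ⬝ᵥ vvec n =
    (((Gam R x : ℝ) * (cst n * cst n) : ℝ) : ℂ) := by
  unfold dotProduct
  simp only [Pi.star_apply, wvec_apply]
  rw [univ_option, Finset.sum_insertNone]
  have h0 : star (Option.casesOn (none : Ybar n) (0 : ℂ)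
      fun y => if R x y then -(cst n : ℂ) else 0) * vvec n none = 0 := by
    show star (0 : ℂ) * vvec n none = 0
    rw [star_zero, zero_mul]
  have hterm : ∀ y : Yb n, star (Option.casesOn (some y : Ybar n) (0 : ℂ)
      fun y => if R x y then -(cst n : ℂ) else 0) * vvec n (some y)
      = if R x y then ((cst n * cst n : ℝ) : ℂ) else 0 := by
    intro y
    show star (if R x y then -(cst n : ℂ) else 0) * -(cst n : ℂ) = _
    by_cases h : R x y
    · rw [if_pos h, if_pos h, star_neg, neg_mul_neg, RCLike.star_def, Complex.conj_ofReal]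
      push_cast
      ring
    · rw [if_neg h, if_neg h, star_zero, zero_mul]
  rw [h0, zero_add, Finset.sum_congr rfl fun y _ => hterm y, Finset.sum_ite, Finset.sum_const,
    Finset.sum_const_zero, add_zero, nsmul_eq_mul]
  unfold Gam
  push_cast
  ring

lemma ww_dot : star (Pix R x *ᵥ vvec n) ⬝ᵥ (Pix R x *ᵥ vvec n) =
    (((Gam R x : ℝ) * (cst n * cst n) : ℝ) : ℂ) := by
  unfold dotProduct
  simp only [Pi.star_apply, wvec_apply]
  rw [univ_option, Finset.sum_insertNone]
  have h0 : star ((Option.casesOn (none : Ybar n) (0 : ℂ)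
      fun y => if R x y then -(cst n : ℂ) else 0 : ℂ)) * ((Option.casesOn (none : Ybar n) (0 : ℂ)
      fun y => if R x y then -(cst n : ℂ) else 0 : ℂ)) = 0 := by
    show star (0 : ℂ) * (0 : ℂ) = 0
    rw [star_zero, zero_mul]
  have hterm : ∀ y : Yb n, star ((Option.casesOn (some y : Ybar n) (0 : ℂ)
      fun y => if R x y then -(cst n : ℂ) else 0 : ℂ)) * ((Option.casesOn (some y : Ybar n) (0 : ℂ)
      fun y => if R x y then -(cst n : ℂ) else 0 : ℂ))
      = if R x y then ((cst n * cst n : ℝ) : ℂ) else 0 := by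
    intro y
    show star (if R x y then -(cst n : ℂ) else 0) * (if R x y then -(cst n : ℂ) else 0) = _
    by_cases h : R x y
    · simp only [if_pos h]
      rw [star_neg, neg_mul_neg, RCLike.star_def, Complex.conj_ofReal]
      push_cast
      ring
    · simp only [if_neg h]
      rw [mul_zero]
  rw [h0, zero_add, Finset.sum_congr rfl fun y _ => hterm y, Finset.sum_ite, Finset.sum_const,
    Finset.sum_const_zero, add_zero, nsmul_eq_mul]
  unfold Gam
  push_cast
  ring

lemma Fmat_herm (n : ℕ) : (Fmat n)ᴴ = Fmat n := by
  rw [Fmat_eq, Matrix.conjTranspose_sub, Matrix.conjTranspose_one, vmv_herm]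

lemma Fmat_invol (n : ℕ) : Fmat n * Fmat n = 1 := by
  rw [Fmat_eq]
  have hVV : vecMulVec (vvec n) (star (vvec n)) * vecMulVec (vvec n) (star (vvec n)) =
      (2 : ℂ) • vecMulVec (vvec n) (star (vvec n)) := by
    rw [vmv_mul_vmv, vvec_dot]
  have expand : ∀ V : Matrix (Ybar n) (Ybar n) ℂ, (1 - V) * (1 - V) = 1 - V - V + V * V := by
    intro V
    noncomm_ring
  rw [expand, hVV]
  module

lemma Delta_herm : (Fmat n * Pix R x * Fmat n - Pix R x)ᴴ
    = Fmat n * Pix R x * Fmat n - Pix R x := by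
  rw [Matrix.conjTranspose_sub, Matrix.conjTranspose_mul, Matrix.conjTranspose_mul,
    Fmat_herm, Pix_herm, Matrix.mul_assoc]

lemma Delta_eq : Fmat n * Pix R x * Fmat n - Pix R x =
    (((Gam R x : ℝ) * (cst n * cst n) : ℝ) : ℂ) • vecMulVec (vvec n) (star (vvec n))
      - vecMulVec (vvec n) (star (Pix R x *ᵥ vvec n))
      - vecMulVec (Pix R x *ᵥ vvec n) (star (vvec n)) := by
  rw [Fmat_eq]
  have hVP : vecMulVec (vvec n) (star (vvec n)) * Pix R x =
      vecMulVec (vvec n) (star (Pix R x *ᵥ vvec n)) := by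
    rw [vmv_mul, Matrix.star_mulVec, Pix_herm]
  have hPV : Pix R x * vecMulVec (vvec n) (star (vvec n)) =
      vecMulVec (Pix R x *ᵥ vvec n) (star (vvec n)) := mul_vmv _ _ _
  have expand : ∀ V P : Matrix (Ybar n) (Ybar n) ℂ,
      (1 - V) * P * (1 - V) - P = V * P * V - (V * P + P * V) := by
    intro V P
    noncomm_ring
  rw [expand, hVP, hPV, vmv_mul_vmv, wv_dot]
  module

end AuxD
section AuxMain
open Matrix
open scoped Matrix.Norms.L2Operator

variable {n : ℕ} {X : Type*} [Fintype X] (R : X → Yb n → Prop) [∀ x, DecidablePred (R x)] (x : X)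

/-- abbreviations for the four rank-one generators -/
def Vm (n : ℕ) : Matrix (Ybar n) (Ybar n) ℂ := vecMulVec (vvec n) (star (vvec n))

def Am : Matrix (Ybar n) (Ybar n) ℂ := vecMulVec (vvec n) (star (Pix R x *ᵥ vvec n))

def Bm : Matrix (Ybar n) (Ybar n) ℂ := vecMulVec (Pix R x *ᵥ vvec n) (star (vvec n))

def Wm : Matrix (Ybar n) (Ybar n) ℂ :=
  vecMulVec (Pix R x *ᵥ vvec n) (star (Pix R x *ᵥ vvec n))

def gc : ℝ := (Gam R x : ℝ) * (cst n * cst n)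

lemma Delta_eq' : Fmat n * Pix R x * Fmat n - Pix R x =
    ((gc R x : ℝ) : ℂ) • Vm n - Am R x - Bm R x := Delta_eq R x

lemma Delta_sq : (Fmat n * Pix R x * Fmat n - Pix R x) * (Fmat n * Pix R x * Fmat n - Pix R x)
    = ((gc R x : ℝ) : ℂ) • Vm n - ((gc R x : ℝ) : ℂ) • Am R x - ((gc R x : ℝ) : ℂ) • Bm R x
      + (2 : ℂ) • Wm R x := by
  have hVV : Vm n * Vm n = (2 : ℂ) • Vm n := by
    rw [Vm, vmv_mul_vmv, vvec_dot]
  have hVA : Vm n * Am R x = (2 : ℂ) • Am R x := by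
    rw [Vm, Am, vmv_mul_vmv, vvec_dot]
  have hVB : Vm n * Bm R x = ((gc R x : ℝ) : ℂ) • Vm n := by
    rw [Vm, Bm, vmv_mul_vmv, vw_dot, gc]
  have hVW : Vm n * Wm R x = ((gc R x : ℝ) : ℂ) • Am R x := by
    rw [Vm, Wm, Am, vmv_mul_vmv, vw_dot, gc]
  have hAV : Am R x * Vm n = ((gc R x : ℝ) : ℂ) • Vm n := by
    rw [Vm, Am, vmv_mul_vmv, wv_dot, gc]
  have hAA : Am R x * Am R x = ((gc R x : ℝ) : ℂ) • Am R x := by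
    rw [Am, vmv_mul_vmv, wv_dot, gc]
  have hAB : Am R x * Bm R x = ((gc R x : ℝ) : ℂ) • Vm n := by
    rw [Am, Bm, Vm, vmv_mul_vmv, ww_dot, gc]
  have hAW : Am R x * Wm R x = ((gc R x : ℝ) : ℂ) • Am R x := by
    rw [Am, Wm, vmv_mul_vmv, ww_dot, gc]
  have hBV : Bm R x * Vm n = (2 : ℂ) • Bm R x := by
    rw [Bm, Vm, vmv_mul_vmv, vvec_dot]
  have hBA : Bm R x * Am R x = (2 : ℂ) • Wm R x := by
    rw [Bm, Am, Wm, vmv_mul_vmv, vvec_dot]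
  have hBB : Bm R x * Bm R x = ((gc R x : ℝ) : ℂ) • Bm R x := by
    rw [Bm, vmv_mul_vmv, vw_dot, gc]
  have hBW : Bm R x * Wm R x = ((gc R x : ℝ) : ℂ) • Wm R x := by
    rw [Bm, Wm, vmv_mul_vmv, vw_dot, gc]
  rw [Delta_eq']
  simp only [sub_mul, mul_sub, add_mul, mul_add, smul_mul_assoc, mul_smul_comm,
    hVV, hVA, hVB, hVW, hAV, hAA, hAB, hAW, hBV, hBA, hBB, hBW, smul_smul]
  module

lemma Delta_poly :
    ((Fmat n * Pix R x * Fmat n - Pix R x) * (Fmat n * Pix R x * Fmat n - Pix R x)) *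
      ((Fmat n * Pix R x * Fmat n - Pix R x) * (Fmat n * Pix R x * Fmat n - Pix R x))
    = ((2 * gc R x - (gc R x) ^ 2 : ℝ) : ℂ) •
      ((Fmat n * Pix R x * Fmat n - Pix R x) * (Fmat n * Pix R x * Fmat n - Pix R x)) := by
  have hVV : Vm n * Vm n = (2 : ℂ) • Vm n := by
    rw [Vm, vmv_mul_vmv, vvec_dot]
  have hVA : Vm n * Am R x = (2 : ℂ) • Am R x := by
    rw [Vm, Am, vmv_mul_vmv, vvec_dot]
  have hVB : Vm n * Bm R x = ((gc R x : ℝ) : ℂ) • Vm n := by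
    rw [Vm, Bm, vmv_mul_vmv, vw_dot, gc]
  have hVW : Vm n * Wm R x = ((gc R x : ℝ) : ℂ) • Am R x := by
    rw [Vm, Wm, Am, vmv_mul_vmv, vw_dot, gc]
  have hAV : Am R x * Vm n = ((gc R x : ℝ) : ℂ) • Vm n := by
    rw [Vm, Am, vmv_mul_vmv, wv_dot, gc]
  have hAA : Am R x * Am R x = ((gc R x : ℝ) : ℂ) • Am R x := by
    rw [Am, vmv_mul_vmv, wv_dot, gc]
  have hAB : Am R x * Bm R x = ((gc R x : ℝ) : ℂ) • Vm n := by
    rw [Am, Bm, Vm, vmv_mul_vmv, ww_dot, gc]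
  have hAW : Am R x * Wm R x = ((gc R x : ℝ) : ℂ) • Am R x := by
    rw [Am, Wm, vmv_mul_vmv, ww_dot, gc]
  have hBV : Bm R x * Vm n = (2 : ℂ) • Bm R x := by
    rw [Bm, Vm, vmv_mul_vmv, vvec_dot]
  have hBA : Bm R x * Am R x = (2 : ℂ) • Wm R x := by
    rw [Bm, Am, Wm, vmv_mul_vmv, vvec_dot]
  have hBB : Bm R x * Bm R x = ((gc R x : ℝ) : ℂ) • Bm R x := by
    rw [Bm, vmv_mul_vmv, vw_dot, gc]
  have hBW : Bm R x * Wm R x = ((gc R x : ℝ) : ℂ) • Wm R x := by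
    rw [Bm, Wm, vmv_mul_vmv, vw_dot, gc]
  have hWV : Wm R x * Vm n = ((gc R x : ℝ) : ℂ) • Bm R x := by
    rw [Wm, Vm, Bm, vmv_mul_vmv, wv_dot, gc]
  have hWA : Wm R x * Am R x = ((gc R x : ℝ) : ℂ) • Wm R x := by
    rw [Wm, Am, vmv_mul_vmv, wv_dot, gc]
  have hWB : Wm R x * Bm R x = ((gc R x : ℝ) : ℂ) • Bm R x := by
    rw [Wm, Bm, vmv_mul_vmv, ww_dot, gc]
  have hWW : Wm R x * Wm R x = ((gc R x : ℝ) : ℂ) • Wm R x := by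
    rw [Wm, vmv_mul_vmv, ww_dot, gc]
  have hcast : ((2 * gc R x - (gc R x) ^ 2 : ℝ) : ℂ)
      = 2 * ((gc R x : ℝ) : ℂ) - ((gc R x : ℝ) : ℂ) ^ 2 := by
    push_cast
    ring
  rw [Delta_sq, hcast]
  simp only [sub_mul, mul_sub, add_mul, mul_add, smul_mul_assoc, mul_smul_comm,
    hVV, hVA, hVB, hVW, hAV, hAA, hAB, hAW, hBV, hBA, hBB, hBW, hWV, hWA, hWB, hWW, smul_smul]
  module

lemma oneK_mul (M N : Matrix (Ybar n) (Ybar n) ℂ) :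
    ((1 : Matrix (Yb n) (Yb n) ℂ) ⊗ₖ M) * ((1 : Matrix (Yb n) (Yb n) ℂ) ⊗ₖ N)
      = (1 : Matrix (Yb n) (Yb n) ℂ) ⊗ₖ (M * N) := by
  rw [← Matrix.mul_kronecker_mul, one_mul]

lemma oneK_herm (M : Matrix (Ybar n) (Ybar n) ℂ) (h : Mᴴ = M) :
    ((1 : Matrix (Yb n) (Yb n) ℂ) ⊗ₖ M)ᴴ = (1 : Matrix (Yb n) (Yb n) ℂ) ⊗ₖ M := by
  ext ⟨a, b⟩ ⟨c, d⟩
  simp only [Matrix.conjTranspose_apply, Matrix.kroneckerMap_apply, Matrix.one_apply]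
  have hM : star (M d b) = M b d := by
    rw [← Matrix.conjTranspose_apply, h]
  by_cases h2 : c = a
  · subst h2
    simp [hM]
  · simp [h2, Ne.symm h2]

lemma cnotFun_invol (p : Yb n × Ybar n) : cnotFun n (cnotFun n p) = p := by
  rcases p with ⟨a, _ | y⟩
  · rfl
  · show (xorY (xorY a y) y, (some y : Ybar n)) = (a, some y)
    have : xorY (xorY a y) y = a := by
      funext i
      simp [xorY, Bool.xor_assoc]
    rw [this]

lemma cnotFun_snd (p : Yb n × Ybar n) : (cnotFun n p).2 = p.2 := by
  rcases p with ⟨a, _ | y⟩ <;> rfl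

lemma CNOT_herm (n : ℕ) : (CNOTmat n)ᴴ = CNOTmat n := by
  ext p q
  simp only [Matrix.conjTranspose_apply, CNOTmat, Matrix.of_apply]
  have hiff : q = cnotFun n p ↔ p = cnotFun n q := by
    constructor <;> intro h <;> rw [h, cnotFun_invol]
  by_cases h : p = cnotFun n q
  · rw [if_pos h, if_pos (hiff.mpr h), star_one]
  · rw [if_neg h, if_neg fun hc => h (hiff.mp hc), star_zero]

lemma CNOT_mul_self (n : ℕ) : CNOTmat n * CNOTmat n = 1 := by
  ext p q
  rw [Matrix.mul_apply]
  simp only [CNOTmat, Matrix.of_apply]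
  rw [Finset.sum_eq_single (cnotFun n q)]
  · rw [cnotFun_invol, if_pos rfl, mul_one, Matrix.one_apply]
  · intro r _ hr
    rw [if_neg hr, mul_zero]
  · intro hmem
    exact absurd (Finset.mem_univ _) hmem

lemma CNOT_comm_diag :
    CNOTmat n * ((1 : Matrix (Yb n) (Yb n) ℂ) ⊗ₖ Pix R x)
      = ((1 : Matrix (Yb n) (Yb n) ℂ) ⊗ₖ Pix R x) * CNOTmat n := by
  have hdiag : (1 : Matrix (Yb n) (Yb n) ℂ) ⊗ₖ Pix R x
      = Matrix.diagonal (fun p : Yb n × Ybar n => if hitB R x p.2 then (1 : ℂ) else 0) := by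
    unfold Pix
    rw [show (1 : Matrix (Yb n) (Yb n) ℂ) = Matrix.diagonal (fun _ => 1) from
      Matrix.diagonal_one.symm, Matrix.diagonal_kronecker_diagonal]
    refine congrArg Matrix.diagonal ?_
    funext p
    rw [one_mul]
  rw [hdiag]
  ext p q
  rw [Matrix.mul_diagonal, Matrix.diagonal_mul]
  simp only [CNOTmat, Matrix.of_apply]
  by_cases h : p = cnotFun n q
  · have h2 : p.2 = q.2 := by rw [h, cnotFun_snd]
    rw [h2, mul_comm]
  · rw [if_neg h, zero_mul, mul_zero]

end AuxMain
section AuxComm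
open Matrix
open scoped Matrix.Norms.L2Operator

variable {n : ℕ} {X : Type*} [Fintype X] (R : X → Yb n → Prop) [∀ x, DecidablePred (R x)] (x : X)

lemma comm_eq :
    commM (Oxsmall n) ((1 : Matrix (Yb n) (Yb n) ℂ) ⊗ₖ Pix R x)
      = ((1 : Matrix (Yb n) (Yb n) ℂ) ⊗ₖ Fmat n) *
          (CNOTmat n * ((1 : Matrix (Yb n) (Yb n) ℂ) ⊗ₖ (Fmat n * Pix R x * Fmat n - Pix R x))
            - ((1 : Matrix (Yb n) (Yb n) ℂ) ⊗ₖ (Fmat n * Pix R x * Fmat n - Pix R x)) *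
              CNOTmat n)
          * ((1 : Matrix (Yb n) (Yb n) ℂ) ⊗ₖ Fmat n) := by
  set F : Matrix (Ybar n) (Ybar n) ℂ := Fmat n with hFdef
  set P : Matrix (Ybar n) (Ybar n) ℂ := Pix R x with hPdef
  set C : Matrix (Yb n × Ybar n) (Yb n × Ybar n) ℂ := CNOTmat n with hCdef
  set G : Matrix (Yb n × Ybar n) (Yb n × Ybar n) ℂ := (1 : Matrix (Yb n) (Yb n) ℂ) ⊗ₖ F
    with hGdef
  set Pk : Matrix (Yb n × Ybar n) (Yb n × Ybar n) ℂ := (1 : Matrix (Yb n) (Yb n) ℂ) ⊗ₖ P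
    with hPkdef
  set K1 : Matrix (Yb n × Ybar n) (Yb n × Ybar n) ℂ :=
    (1 : Matrix (Yb n) (Yb n) ℂ) ⊗ₖ (F * P * F) with hK1def
  have hsub : (1 : Matrix (Yb n) (Yb n) ℂ) ⊗ₖ (F * P * F - P) = K1 - Pk := by
    have hadd := Matrix.kronecker_add (1 : Matrix (Yb n) (Yb n) ℂ) (F * P * F - P) P
    have hΔP : (F * P * F - P) + P = F * P * F := by abel
    rw [hΔP] at hadd
    rw [eq_sub_iff_add_eq, hPkdef, hK1def]
    exact hadd.symm
  have hO : Oxsmall n = G * C * G := rfl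
  have hK1G : K1 * G = (1 : Matrix (Yb n) (Yb n) ℂ) ⊗ₖ (F * P) := by
    rw [hK1def, hGdef, oneK_mul, mul_assoc (F * P), hFdef, Fmat_invol, mul_one]
  have hGK1 : G * K1 = (1 : Matrix (Yb n) (Yb n) ℂ) ⊗ₖ (P * F) := by
    rw [hK1def, hGdef, oneK_mul, ← mul_assoc, ← mul_assoc, hFdef, Fmat_invol, one_mul]
  have hGPk : G * Pk = (1 : Matrix (Yb n) (Yb n) ℂ) ⊗ₖ (F * P) := by
    rw [hGdef, hPkdef, oneK_mul]
  have hPkG : Pk * G = (1 : Matrix (Yb n) (Yb n) ℂ) ⊗ₖ (P * F) := by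
    rw [hGdef, hPkdef, oneK_mul]
  have hCPk : C * Pk = Pk * C := by
    rw [hCdef, hPkdef, hPdef]
    exact CNOT_comm_diag R x
  have e1 : G * (C * (K1 - Pk) - (K1 - Pk) * C) * G
      = G * (C * K1) * G - G * (C * Pk) * G - (G * (K1 * C) * G - G * (Pk * C) * G) := by
    noncomm_ring
  have e2 : G * (C * Pk) * G = G * (Pk * C) * G := by rw [hCPk]
  have e3 : G * (C * K1) * G = G * C * G * Pk := by
    rw [show G * (C * K1) * G = (G * C) * (K1 * G) from by noncomm_ring, hK1G,
      show G * C * G * Pk = (G * C) * (G * Pk) from by noncomm_ring, hGPk]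
  have e4 : G * (K1 * C) * G = Pk * (G * C * G) := by
    rw [show G * (K1 * C) * G = (G * K1) * (C * G) from by noncomm_ring, hGK1,
      show Pk * (G * C * G) = (Pk * G) * (C * G) from by noncomm_ring, hPkG]
  show Oxsmall n * Pk - Pk * Oxsmall n = _
  rw [hsub, hO, e1, e2, e3, e4]
  abel

end AuxComm
section MainProof
open Matrix
open scoped Matrix.Norms.L2Operator

-- STATEMENT 8
theorem stmt8 (n : ℕ) {X : Type*} [Fintype X] [Nonempty X]
    (R : X → Yb n → Prop) [∀ x, DecidablePred (R x)] (x : X) :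
    opNorm (commM (Oxsmall n) ((1 : Matrix (Yb n) (Yb n) ℂ) ⊗ₖ Pix R x)) ≤
      2 * (2 : ℝ) ^ (-(n : ℝ) / 2) * Real.sqrt (2 * (Gam R x : ℝ)) := by
  have hcard : Gam R x ≤ 2 ^ n := by
    unfold Gam
    calc (Finset.univ.filter fun y => R x y).card
        ≤ (Finset.univ : Finset (Yb n)).card := Finset.card_filter_le _ _
      _ = 2 ^ n := by rw [Finset.card_univ, card_Yb]
  have hΓle : (Gam R x : ℝ) ≤ (2 : ℝ) ^ (n : ℕ) := by exact_mod_cast hcard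
  have hγ0 : 0 ≤ gc R x :=
    mul_nonneg (Nat.cast_nonneg _) (mul_nonneg (cst_pos n).le (cst_pos n).le)
  have hγ1 : gc R x ≤ 1 := by
    rw [gc, cst_sq]
    have h2n : (0 : ℝ) < (2 : ℝ) ^ (n : ℕ) := by positivity
    have hinv : (2 : ℝ) ^ (-(n : ℝ)) = ((2 : ℝ) ^ (n : ℕ))⁻¹ := by
      rw [Real.rpow_neg (by norm_num), Real.rpow_natCast]
    rw [hinv, ← div_eq_mul_inv, div_le_one h2n]
    exact hΓle
  have hK0 : 0 ≤ 2 * gc R x - (gc R x) ^ 2 := by nlinarith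
  have hDKherm := oneK_herm (n := n) _ (Delta_herm R x)
  have hDKpoly : ((1 : Matrix (Yb n) (Yb n) ℂ) ⊗ₖ (Fmat n * Pix R x * Fmat n - Pix R x)) *
      ((1 : Matrix (Yb n) (Yb n) ℂ) ⊗ₖ (Fmat n * Pix R x * Fmat n - Pix R x)) *
      (((1 : Matrix (Yb n) (Yb n) ℂ) ⊗ₖ (Fmat n * Pix R x * Fmat n - Pix R x)) *
      ((1 : Matrix (Yb n) (Yb n) ℂ) ⊗ₖ (Fmat n * Pix R x * Fmat n - Pix R x)))
      = ((2 * gc R x - (gc R x) ^ 2 : ℝ) : ℂ) •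
        (((1 : Matrix (Yb n) (Yb n) ℂ) ⊗ₖ (Fmat n * Pix R x * Fmat n - Pix R x)) *
        ((1 : Matrix (Yb n) (Yb n) ℂ) ⊗ₖ (Fmat n * Pix R x * Fmat n - Pix R x))) := by
    simp only [oneK_mul]
    rw [Delta_poly, Matrix.kronecker_smul]
  have hDKnorm : ‖(1 : Matrix (Yb n) (Yb n) ℂ) ⊗ₖ (Fmat n * Pix R x * Fmat n - Pix R x)‖
      ≤ Real.sqrt (2 * gc R x - (gc R x) ^ 2) :=
    norm_le_sqrt_of_poly _ _ hK0 hDKherm hDKpoly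
  have hGnorm : ‖(1 : Matrix (Yb n) (Yb n) ℂ) ⊗ₖ Fmat n‖ ≤ 1 := by
    apply norm_le_one_of_unitary
    rw [oneK_herm _ (Fmat_herm n), oneK_mul, Fmat_invol, Matrix.one_kronecker_one]
  have hCnorm : ‖CNOTmat n‖ ≤ 1 := by
    apply norm_le_one_of_unitary
    rw [CNOT_herm, CNOT_mul_self]
  have hfin : Real.sqrt (2 * gc R x - (gc R x) ^ 2) ≤ Real.sqrt (2 * gc R x) :=
    Real.sqrt_le_sqrt (by nlinarith)
  have hval : Real.sqrt (2 * gc R x) = cst n * Real.sqrt (2 * (Gam R x : ℝ)) := by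
    rw [show 2 * gc R x = (cst n * cst n) * (2 * (Gam R x : ℝ)) from by rw [gc]; ring,
      Real.sqrt_mul (mul_nonneg (cst_pos n).le (cst_pos n).le), Real.sqrt_mul_self (cst_pos n).le]
  set G : Matrix (Yb n × Ybar n) (Yb n × Ybar n) ℂ :=
    (1 : Matrix (Yb n) (Yb n) ℂ) ⊗ₖ Fmat n with hGdef
  set DK : Matrix (Yb n × Ybar n) (Yb n × Ybar n) ℂ :=
    (1 : Matrix (Yb n) (Yb n) ℂ) ⊗ₖ (Fmat n * Pix R x * Fmat n - Pix R x) with hDKdef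
  set C : Matrix (Yb n × Ybar n) (Yb n × Ybar n) ℂ := CNOTmat n with hCdef
  calc opNorm (commM (Oxsmall n) ((1 : Matrix (Yb n) (Yb n) ℂ) ⊗ₖ Pix R x))
      = ‖G * (C * DK - DK * C) * G‖ := by rw [opNorm_eq_norm, comm_eq R x]
    _ ≤ ‖G * (C * DK - DK * C)‖ * ‖G‖ := Matrix.l2_opNorm_mul _ _
    _ ≤ ‖G * (C * DK - DK * C)‖ * 1 :=
        mul_le_mul_of_nonneg_left hGnorm (norm_nonneg _)
    _ = ‖G * (C * DK - DK * C)‖ := mul_one _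
    _ ≤ ‖G‖ * ‖C * DK - DK * C‖ := Matrix.l2_opNorm_mul _ _
    _ ≤ 1 * ‖C * DK - DK * C‖ :=
        mul_le_mul_of_nonneg_right hGnorm (norm_nonneg _)
    _ = ‖C * DK - DK * C‖ := one_mul _
    _ ≤ ‖C * DK‖ + ‖DK * C‖ := norm_sub_le _ _
    _ ≤ ‖C‖ * ‖DK‖ + ‖DK‖ * ‖C‖ :=
        add_le_add (Matrix.l2_opNorm_mul _ _) (Matrix.l2_opNorm_mul _ _)
    _ ≤ 1 * ‖DK‖ + ‖DK‖ * 1 :=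
        add_le_add (mul_le_mul_of_nonneg_right hCnorm (norm_nonneg _))
          (mul_le_mul_of_nonneg_left hCnorm (norm_nonneg _))
    _ = 2 * ‖DK‖ := by ring
    _ ≤ 2 * Real.sqrt (2 * gc R x - (gc R x) ^ 2) := by linarith [hDKnorm]
    _ ≤ 2 * Real.sqrt (2 * gc R x) := by linarith [hfin]
    _ = 2 * (cst n * Real.sqrt (2 * (Gam R x : ℝ))) := by rw [hval]
    _ = 2 * (2 : ℝ) ^ (-(n : ℝ) / 2) * Real.sqrt (2 * (Gam R x : ℝ)) := by
        rw [show (2 : ℝ) ^ (-(n : ℝ) / 2) = cst n from rfl]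
        ring

end MainProof
end
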